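/- Let k be a field and G a finite group. Let X : Rep k G with underlying module V and action ρ, and let (π¹_g)_{g∈G} and (π²_g)_{g∈G} be two conjugation-equivariant systems of projections on V, with associated half-braidings λ¹ and λ² on X (determined by λ^i_A(a ⊗ x) = Σ_g (π^i_g x) ⊗ (ρ_A(g) a)). Then the pair (λ¹, λ²) satisfies COMM if and only if π¹_g ∘ π²_h = π²_h ∘ π¹_g for all g, h ∈ G. -/

import Mathlib

open CategoryTheory CategoryTheory.MonoidalCategory TensorProduct

universe v u

/-- The COMM compatibility condition of an ordered pair of half-braidings `(l₁, l₂)` on an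
object `X` of a braided category, where the component `U ⊗ X ⟶ X ⊗ U` of `lᵢ` is
`(lᵢ.β U).inv` in Mathlib's convention. -/
def COMM {C : Type u} [Category.{v} C] [MonoidalCategory C] [BraidedCategory C]
    {X : C} (l₁ l₂ : HalfBraiding X) : Prop :=
  ∀ A B : C,
    (α_ A B X).hom ≫ (A ◁ (l₂.β B).inv) ≫ (α_ A X B).inv ≫ ((l₁.β A).inv ▷ B) ≫
        (α_ X A B).hom ≫ (X ◁ (β_ A B).hom) =
      ((β_ B A).inv ▷ X) ≫ (α_ B A X).hom ≫ (B ◁ (l₁.β A).inv) ≫ (α_ B X A).inv ≫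
        ((l₂.β B).inv ▷ A) ≫ (α_ X B A).hom

section Aux

variable {k G : Type u} [Field k] [Group G] [Fintype G] {X : Rep k G}
  (π₁ π₂ : G → (X →ₗ[k] X)) (l₁ l₂ : HalfBraiding X)

theorem lhs_apply
    (hl₁ : ∀ (A : Rep k G) (a : A) (x : X),
      (l₁.β A).inv.hom (a ⊗ₜ[k] x) = ∑ g : G, (π₁ g x) ⊗ₜ[k] (A.ρ g a))
    (hl₂ : ∀ (A : Rep k G) (a : A) (x : X),
      (l₂.β A).inv.hom (a ⊗ₜ[k] x) = ∑ g : G, (π₂ g x) ⊗ₜ[k] (A.ρ g a))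
    (A B : Rep k G) (a : A) (b : B) (x : X) :
    ((α_ A B X).hom ≫ (A ◁ (l₂.β B).inv) ≫ (α_ A X B).inv ≫ ((l₁.β A).inv ▷ B) ≫
        (α_ X A B).hom ≫ (X ◁ (β_ A B).hom)).hom ((a ⊗ₜ b) ⊗ₜ x) =
    ∑ h : G, ∑ g : G, (π₁ g (π₂ h x)) ⊗ₜ[k] ((B.ρ h b) ⊗ₜ[k] (A.ρ g a)) := by
  simp only [Rep.hom_comp, Representation.IntertwiningMap.comp_apply]
  have e1 : ((α_ A B X).hom).hom ((a ⊗ₜ b) ⊗ₜ x) = a ⊗ₜ (b ⊗ₜ x) := rfl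
  rw [e1]
  have e2 : ((A ◁ (l₂.β B).inv)).hom (a ⊗ₜ (b ⊗ₜ x)) = a ⊗ₜ ((l₂.β B).inv.hom (b ⊗ₜ x)) := rfl
  rw [e2, hl₂, tmul_sum, map_sum, map_sum, map_sum, map_sum]
  refine Finset.sum_congr rfl fun h _ => ?_
  have e3 : ((α_ A X B).inv).hom (a ⊗ₜ ((π₂ h x) ⊗ₜ (B.ρ h b))) = (a ⊗ₜ (π₂ h x)) ⊗ₜ (B.ρ h b) := rfl
  rw [e3]
  have e4 : (((l₁.β A).inv ▷ B)).hom ((a ⊗ₜ (π₂ h x)) ⊗ₜ (B.ρ h b))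
      = ((l₁.β A).inv.hom (a ⊗ₜ (π₂ h x))) ⊗ₜ (B.ρ h b) := rfl
  rw [e4, hl₁, sum_tmul, map_sum, map_sum]
  exact Finset.sum_congr rfl fun g _ => rfl

theorem rhs_apply
    (hl₁ : ∀ (A : Rep k G) (a : A) (x : X),
      (l₁.β A).inv.hom (a ⊗ₜ[k] x) = ∑ g : G, (π₁ g x) ⊗ₜ[k] (A.ρ g a))
    (hl₂ : ∀ (A : Rep k G) (a : A) (x : X),
      (l₂.β A).inv.hom (a ⊗ₜ[k] x) = ∑ g : G, (π₂ g x) ⊗ₜ[k] (A.ρ g a))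
    (A B : Rep k G) (a : A) (b : B) (x : X) :
    (((β_ B A).inv ▷ X) ≫ (α_ B A X).hom ≫ (B ◁ (l₁.β A).inv) ≫ (α_ B X A).inv ≫
        ((l₂.β B).inv ▷ A) ≫ (α_ X B A).hom).hom ((a ⊗ₜ b) ⊗ₜ x) =
    ∑ g : G, ∑ h : G, (π₂ h (π₁ g x)) ⊗ₜ[k] ((B.ρ h b) ⊗ₜ[k] (A.ρ g a)) := by
  simp only [Rep.hom_comp, Representation.IntertwiningMap.comp_apply]
  have e1 : (((β_ B A).inv ▷ X)).hom ((a ⊗ₜ b) ⊗ₜ x) = (b ⊗ₜ a) ⊗ₜ x := rfl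
  rw [e1]
  have e2 : ((α_ B A X).hom).hom ((b ⊗ₜ a) ⊗ₜ x) = b ⊗ₜ (a ⊗ₜ x) := rfl
  rw [e2]
  have e3 : ((B ◁ (l₁.β A).inv)).hom (b ⊗ₜ (a ⊗ₜ x)) = b ⊗ₜ ((l₁.β A).inv.hom (a ⊗ₜ x)) := rfl
  rw [e3, hl₁, tmul_sum, map_sum, map_sum, map_sum]
  refine Finset.sum_congr rfl fun g _ => ?_
  have e4 : ((α_ B X A).inv).hom (b ⊗ₜ ((π₁ g x) ⊗ₜ (A.ρ g a))) = (b ⊗ₜ (π₁ g x)) ⊗ₜ (A.ρ g a) := rfl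
  rw [e4]
  have e5 : (((l₂.β B).inv ▷ A)).hom ((b ⊗ₜ (π₁ g x)) ⊗ₜ (A.ρ g a))
      = ((l₂.β B).inv.hom (b ⊗ₜ (π₁ g x))) ⊗ₜ (A.ρ g a) := rfl
  rw [e5, hl₂, sum_tmul, map_sum]
  exact Finset.sum_congr rfl fun h _ => rfl

end Aux


/-- For a finite group `G` and `X : Rep k G`, let `π¹`, `π²` be two
conjugation-equivariant systems of projections on the underlying module of `X`, with
associated half-braidings `l₁`, `l₂`. Then `(l₁, l₂)` satisfies COMM if and only if all the
projections of the first system commute with all the projections of the second system. -/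
theorem COMM_iff_projections_commute
    {k G : Type u} [Field k] [Group G] [Fintype G] (X : Rep k G)
    (π₁ π₂ : G → (X →ₗ[k] X))
    (hsum₁ : ∑ g : G, π₁ g = LinearMap.id)
    (horth₁ : ∀ g h : G, g ≠ h → (π₁ g) ∘ₗ (π₁ h) = 0)
    (hidem₁ : ∀ g : G, (π₁ g) ∘ₗ (π₁ g) = π₁ g)
    (hconj₁ : ∀ g h : G, (X.ρ h) ∘ₗ (π₁ g) = (π₁ (h * g * h⁻¹)) ∘ₗ (X.ρ h))
    (hsum₂ : ∑ g : G, π₂ g = LinearMap.id)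
    (horth₂ : ∀ g h : G, g ≠ h → (π₂ g) ∘ₗ (π₂ h) = 0)
    (hidem₂ : ∀ g : G, (π₂ g) ∘ₗ (π₂ g) = π₂ g)
    (hconj₂ : ∀ g h : G, (X.ρ h) ∘ₗ (π₂ g) = (π₂ (h * g * h⁻¹)) ∘ₗ (X.ρ h))
    (l₁ l₂ : HalfBraiding X)
    (hl₁ : ∀ (A : Rep k G) (a : A) (x : X),
      (l₁.β A).inv.hom (a ⊗ₜ[k] x) = ∑ g : G, (π₁ g x) ⊗ₜ[k] (A.ρ g a))
    (hl₂ : ∀ (A : Rep k G) (a : A) (x : X),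
      (l₂.β A).inv.hom (a ⊗ₜ[k] x) = ∑ g : G, (π₂ g x) ⊗ₜ[k] (A.ρ g a)) :
    COMM l₁ l₂ ↔ ∀ g h : G, (π₁ g) ∘ₗ (π₂ h) = (π₂ h) ∘ₗ (π₁ g) := by
  classical
  constructor
  · intro hc g₀ h₀
    have hρ : ∀ g : G, (Rep.leftRegular k G).ρ g (MonoidAlgebra.single (1:G) (1:k))
        = MonoidAlgebra.single g 1 := by
      intro g
      show Representation.ofMulAction k G G g (MonoidAlgebra.single 1 1) = _
      rw [Representation.ofMulAction_single, smul_eq_mul, mul_one]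
    set L := Rep.leftRegular k G with hL
    have heq := hc L L
    apply LinearMap.ext
    intro x
    have happ := DFunLike.congr_fun (congrArg Rep.Hom.hom heq)
      ((MonoidAlgebra.single (1:G) (1:k) ⊗ₜ[k] MonoidAlgebra.single (1:G) (1:k)) ⊗ₜ[k] x)
    rw [lhs_apply π₁ π₂ l₁ l₂ hl₁ hl₂ L L _ _ x,
        rhs_apply π₁ π₂ l₁ l₂ hl₁ hl₂ L L _ _ x] at happ
    simp only [show ∀ g : G, L.ρ g (MonoidAlgebra.single (1:G) (1:k)) = MonoidAlgebra.single g 1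
      from hρ] at happ
    -- extraction linear map
    let φ : (MonoidAlgebra k G ⊗[k] MonoidAlgebra k G) →ₗ[k] k :=
      (TensorProduct.lid k k).toLinearMap ∘ₗ
        TensorProduct.map (Finsupp.lapply h₀ ∘ₗ (MonoidAlgebra.coeffLinearEquiv k).toLinearMap)
          (Finsupp.lapply g₀ ∘ₗ (MonoidAlgebra.coeffLinearEquiv k).toLinearMap)
    let E : (X ⊗[k] (MonoidAlgebra k G ⊗[k] MonoidAlgebra k G) : Type u) →ₗ[k] X :=
      TensorProduct.lift (((LinearMap.lsmul k X).comp φ).flip)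
    have hE := congrArg (fun t => E t) happ
    simp only [map_sum] at hE
    have hEt : ∀ (y : X) (h g : G),
        E (y ⊗ₜ[k] ((MonoidAlgebra.single h (1:k)) ⊗ₜ[k] (MonoidAlgebra.single g (1:k))))
          = ((if h = h₀ then (1:k) else 0) * (if g = g₀ then (1:k) else 0)) • y := by
      intro y h g
      simp only [E, φ, TensorProduct.lift.tmul, LinearMap.flip_apply, LinearMap.comp_apply,
        TensorProduct.map_tmul, LinearEquiv.coe_coe, TensorProduct.lid_tmul,
        Finsupp.lapply_apply, Finsupp.single_apply, LinearMap.lsmul_apply, smul_eq_mul]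
      simp only [show ∀ a : G, (MonoidAlgebra.coeffLinearEquiv k) (MonoidAlgebra.single a (1:k))
        = Finsupp.single a 1 from fun _ => rfl, Finsupp.single_apply]
    simp only [hEt, ite_mul, one_mul, zero_mul, ite_smul, one_smul, zero_smul,
      Finset.sum_ite_eq', Finset.mem_univ, if_true] at hE
    simp only [LinearMap.comp_apply]
    rw [← hE, Finset.sum_comm]
    simp only [Finset.sum_ite_eq', Finset.mem_univ, if_true]
  · intro hcomm A B
    have key : ∀ (a : A) (b : B) (x : X),
        ((α_ A B X).hom ≫ (A ◁ (l₂.β B).inv) ≫ (α_ A X B).inv ≫ ((l₁.β A).inv ▷ B) ≫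
          (α_ X A B).hom ≫ (X ◁ (β_ A B).hom)).hom ((a ⊗ₜ[k] b) ⊗ₜ[k] x) =
        (((β_ B A).inv ▷ X) ≫ (α_ B A X).hom ≫ (B ◁ (l₁.β A).inv) ≫ (α_ B X A).inv ≫
          ((l₂.β B).inv ▷ A) ≫ (α_ X B A).hom).hom ((a ⊗ₜ[k] b) ⊗ₜ[k] x) := by
      intro a b x
      rw [lhs_apply π₁ π₂ l₁ l₂ hl₁ hl₂ A B a b x,
          rhs_apply π₁ π₂ l₁ l₂ hl₁ hl₂ A B a b x, Finset.sum_comm]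
      refine Finset.sum_congr rfl fun g _ => Finset.sum_congr rfl fun h _ => ?_
      have := congrArg (fun f => f x) (hcomm g h)
      simp only [LinearMap.comp_apply] at this
      rw [this]
    apply Rep.hom_ext
    apply Representation.IntertwiningMap.ext
    apply TensorProduct.ext'
    intro t x
    induction t using TensorProduct.induction_on with
    | zero =>
        rw [zero_tmul, map_zero, map_zero]
    | tmul a b => exact key a b x
    | add t₁ t₂ h₁ h₂ =>
        rw [add_tmul, map_add, map_add, h₁, h₂]
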